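/- Let N ∈ ℕ and let x, y ∈ ℝᴺ. Mapping each coordinate to a coherent state and taking the tensor-product feature map, the resulting kernel is the multidimensional RBF kernel: ∏_{i=1}^N ( ∑_{n=0}^∞ c_n(x_i) c_n(y_i) ) = exp(-‖x - y‖²/2), where c_n(t) = exp(-t²/2) · tⁿ/√(n!) and ‖·‖ is the Euclidean norm on ℝᴺ. -/

import Mathlib

/-- The `n`-th number-basis coefficient of the coherent state with real amplitude `t`:
`c_n(t) = exp(-t²/2) · tⁿ/√(n!)`. -/
noncomputable def realCoherentCoeff (t : ℝ) (n : ℕ) : ℝ :=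
  Real.exp (-(t ^ 2) / 2) * t ^ n / Real.sqrt n.factorial

lemma coherent_kernel_1d (s t : ℝ) :
    (∑' n : ℕ, realCoherentCoeff s n * realCoherentCoeff t n) =
      Real.exp (-(s - t) ^ 2 / 2) := by
  have key : ∀ n : ℕ, realCoherentCoeff s n * realCoherentCoeff t n =
      Real.exp (-(s ^ 2) / 2) * Real.exp (-(t ^ 2) / 2) * ((s * t) ^ n / n.factorial) := by
    intro n
    have hfac : (0 : ℝ) < n.factorial := by exact_mod_cast n.factorial_pos
    have hs : Real.sqrt n.factorial * Real.sqrt n.factorial = n.factorial :=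
      Real.mul_self_sqrt hfac.le
    simp only [realCoherentCoeff]
    rw [div_mul_div_comm, hs]
    ring_nf
  rw [tsum_congr key, tsum_mul_left]
  have hexp : (∑' n : ℕ, ((s * t) ^ n / (n.factorial : ℝ))) = Real.exp (s * t) := by
    rw [Real.exp_eq_exp_ℝ, NormedSpace.exp_eq_tsum_div]
  rw [hexp, ← Real.exp_add, ← Real.exp_add]
  ring_nf

/-- mapping each coordinate of `x ∈ ℝᴺ` to a coherent state and taking the
tensor-product feature map yields the multidimensional RBF kernel:
`∏ᵢ (∑ₙ c_n(xᵢ) c_n(yᵢ)) = exp(-‖x - y‖²/2)`. -/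
theorem coherentState_tensor_kernel_eq_rbf (N : ℕ) (x y : EuclideanSpace ℝ (Fin N)) :
    ∏ i : Fin N, (∑' n : ℕ, realCoherentCoeff (x i) n * realCoherentCoeff (y i) n) =
      Real.exp (-‖x - y‖ ^ 2 / 2) := by
  have hnorm : ‖x - y‖ ^ 2 = ∑ i : Fin N, (x i - y i) ^ 2 := by
    rw [EuclideanSpace.norm_eq, Real.sq_sqrt (by positivity)]
    congr 1; ext i
    simp [Real.norm_eq_abs, sq_abs]
  simp_rw [coherent_kernel_1d, ← Real.exp_sum]
  rw [hnorm]
  congr 1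
  simp [neg_div, Finset.sum_div, Finset.sum_neg_distrib]
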